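/- Let U₂ denote the unitary group of 2×2 complex matrices, regarded as a topological group, and let σ : U₂ → U₂ be the continuous group automorphism given by entrywise complex conjugation. Consider the topological group L^{τ̃_c}U₂ = { g : ℝ/2πℤ → U₂ continuous | g(θ) = σ(g(θ + π)) for all θ } (a subgroup of the group of continuous maps from the circle ℝ/2πℤ to U₂ under pointwise multiplication, with the compact-open topology), and the twisted loop group L_σU₂ = { h : [0,1] → U₂ continuous | h(0) = σ(h(1)) } (a subgroup of the group of continuous maps from [0,1] to U₂ under pointwise multiplication, with the compact-open topology). Then the restriction map sending g to the path t ↦ g(πt), t ∈ [0,1], is an isomorphism of topological groups from L^{τ̃_c}U₂ onto L_σU₂. -/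

import Mathlib

/-! **Statement 7.** The real loop group of type (c),
`L^{τ̃_c}U₂ = { g : ℝ/2πℤ → U₂ continuous | g(θ) = σ(g(θ+π)) }`, is isomorphic as a
topological group to the twisted loop group
`L_σU₂ = { h : [0,1] → U₂ continuous | h(0) = σ(h(1)) }`, via the restriction map
`g ↦ (t ↦ g(πt))`, where `σ` is entrywise complex conjugation on `U₂`. -/

noncomputable section

/-- The unitary group of 2×2 complex matrices, as a topological group. -/
abbrev U2 : Submonoid (Matrix (Fin 2) (Fin 2) ℂ) := Matrix.unitaryGroup (Fin 2) ℂ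

instance : IsTopologicalGroup U2 where
  continuous_mul := continuous_mul
  continuous_inv := continuous_induced_rng.2 (continuous_star.comp continuous_subtype_val)

/-- The real loop group of type (c) determined by an automorphism `σ` of `U₂`:
continuous maps `g : ℝ/2πℤ → U₂` with `g(θ) = σ(g(θ + π))` for all `θ`, as a subgroup of
the topological group of continuous loops in `U₂` under pointwise multiplication (with the
compact-open topology). -/
def realLoopGroupC (σ : U2 ≃* U2) : Subgroup C(AddCircle (2 * Real.pi), U2) where
  carrier := {g | ∀ θ : AddCircle (2 * Real.pi), g θ = σ (g (θ + (Real.pi : AddCircle (2 * Real.pi))))}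
  mul_mem' := by
    intro a b ha hb θ
    simp only [ContinuousMap.mul_apply, ha θ, hb θ, map_mul]
  one_mem' := by
    intro θ
    simp
  inv_mem' := by
    intro a ha θ
    simp only [ContinuousMap.inv_apply, ha θ, map_inv]

/-- The twisted loop group determined by an automorphism `σ` of `U₂`: continuous paths
`h : [0,1] → U₂` with `h(0) = σ(h(1))`, as a subgroup of the topological group of continuous
maps `[0,1] → U₂` under pointwise multiplication (with the compact-open topology). -/
def twistedLoopGroup (σ : U2 ≃* U2) : Subgroup C(unitInterval, U2) where
  carrier := {h | h 0 = σ (h 1)}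
  mul_mem' := by
    intro a b ha hb
    simp only [Set.mem_setOf_eq, ContinuousMap.mul_apply] at *
    rw [ha, hb, map_mul]
  one_mem' := by simp
  inv_mem' := by
    intro a ha
    simp only [Set.mem_setOf_eq, ContinuousMap.inv_apply] at *
    rw [ha, map_inv]

/-- The embedding of `[0,1]` in the circle `ℝ/2πℤ` as a half circle, `t ↦ πt`. -/
def halfCircle : C(unitInterval, AddCircle (2 * Real.pi)) :=
  ⟨fun t => ((Real.pi * (t : ℝ) : ℝ) : AddCircle (2 * Real.pi)),
    (AddCircle.continuous_mk' _).comp (continuous_const.mul continuous_subtype_val)⟩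

namespace Stmt7Aux

open Set Real AddCircle Topology

lemma two_pi_pos : (0:ℝ) < 2 * Real.pi := by linarith [Real.pi_pos]

instance : Fact ((0:ℝ) < 2 * Real.pi) := ⟨two_pi_pos⟩

lemma pi_lt_two_pi : Real.pi < 2 * Real.pi := by linarith [Real.pi_pos]

lemma coe_sub_period (x : ℝ) :
    ((x - 2 * Real.pi : ℝ) : AddCircle (2 * Real.pi)) = (x : AddCircle (2 * Real.pi)) := by
  have := AddCircle.coe_add_period (p := 2 * Real.pi) (x - 2 * Real.pi)
  rw [sub_add_cancel] at this
  exact this.symm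

lemma exists_rep (θ : AddCircle (2 * Real.pi)) :
    ∃ x : ℝ, x ∈ Set.Ico (0:ℝ) (0 + 2 * Real.pi) ∧ (x : AddCircle (2 * Real.pi)) = θ :=
  ⟨(AddCircle.equivIco (2 * Real.pi) 0 θ : ℝ), (AddCircle.equivIco (2 * Real.pi) 0 θ).2,
    (AddCircle.equivIco (2 * Real.pi) 0).symm_apply_apply θ⟩

variable (σ : U2 ≃* U2)

/-- extension of a path to `ℝ`. -/
noncomputable def HH (h : C(unitInterval, U2)) : ℝ → U2 := Set.IccExtend zero_le_one h

lemma HH_cont (h : C(unitInterval, U2)) : Continuous (HH h) := h.continuous.Icc_extend'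

lemma HH_coe (h : C(unitInterval, U2)) (t : unitInterval) : HH h (t : ℝ) = h t :=
  Set.IccExtend_val zero_le_one h t

lemma HH_zero (h : C(unitInterval, U2)) : HH h 0 = h 0 := Set.IccExtend_left zero_le_one h

lemma HH_one (h : C(unitInterval, U2)) : HH h 1 = h 1 := Set.IccExtend_right zero_le_one h

/-- The fundamental-domain description of the glued loop. -/
noncomputable def ff (h : C(unitInterval, U2)) : ℝ → U2 :=
  fun x => if x ≤ Real.pi then HH h (x / Real.pi) else σ (HH h (x / Real.pi - 1))

/-- The glued loop on the circle. -/
noncomputable def gg (h : C(unitInterval, U2)) : AddCircle (2 * Real.pi) → U2 :=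
  AddCircle.liftIco (2 * Real.pi) 0 (ff σ h)

variable {σ}
variable (hσ2 : ∀ A : U2, σ (σ A) = A) {h : C(unitInterval, U2)} (hh : h 0 = σ (h 1))

lemma ff_of_le {x : ℝ} (hx : x ≤ Real.pi) : ff σ h x = HH h (x / Real.pi) := if_pos hx

include hσ2 hh in
lemma ff_of_ge {x : ℝ} (hx : Real.pi ≤ x) : ff σ h x = σ (HH h (x / Real.pi - 1)) := by
  rcases eq_or_lt_of_le hx with rfl | hlt
  · rw [ff, if_pos le_rfl, div_self Real.pi_ne_zero, sub_self, HH_zero, hh, hσ2, ← HH_one]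
  · rw [ff, if_neg (not_le.2 hlt)]

include hσ2 hh in
lemma ff_cont (hσc : Continuous σ) : Continuous (ff σ h) := by
  refine Continuous.if_le ?_ ?_ continuous_id continuous_const ?_
  · exact (HH_cont h).comp (continuous_id.div_const _)
  · exact hσc.comp ((HH_cont h).comp ((continuous_id.div_const _).sub continuous_const))
  · rintro x rfl
    rw [div_self Real.pi_ne_zero, sub_self, HH_zero, hh, hσ2, ← HH_one]

include hσ2 hh in
lemma ff_periodic_end : ff σ h 0 = ff σ h (0 + 2 * Real.pi) := by
  rw [ff_of_le (le_of_lt Real.pi_pos), zero_div, HH_zero, zero_add,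
    ff_of_ge hσ2 hh (le_of_lt pi_lt_two_pi)]
  have : 2 * Real.pi / Real.pi - 1 = 1 := by
    rw [mul_div_assoc, div_self Real.pi_ne_zero]
    norm_num
  rw [this, HH_one, hh]

include hσ2 hh in
lemma gg_cont (hσc : Continuous σ) : Continuous (gg σ h) :=
  AddCircle.liftIco_continuous (ff_periodic_end hσ2 hh) ((ff_cont hσ2 hh hσc).continuousOn)

lemma gg_coe_pi_mul (t : unitInterval) :
    gg σ h ((Real.pi * t : ℝ) : AddCircle (2 * Real.pi)) = h t := by
  have ht0 : (0:ℝ) ≤ t := t.2.1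
  have ht1 : (t:ℝ) ≤ 1 := t.2.2
  have hmem : (Real.pi * t : ℝ) ∈ Set.Ico (0:ℝ) (0 + 2 * Real.pi) := by
    constructor
    · positivity
    · nlinarith [Real.pi_pos]
  rw [gg, AddCircle.liftIco_coe_apply hmem, ff_of_le (by nlinarith [Real.pi_pos]),
    mul_div_cancel_left₀ _ Real.pi_ne_zero, HH_coe]

include hσ2 hh in
lemma gg_equivariant (θ : AddCircle (2 * Real.pi)) :
    gg σ h θ = σ (gg σ h (θ + (Real.pi : AddCircle (2 * Real.pi)))) := by
  obtain ⟨x, hx, rfl⟩ := exists_rep θ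
  rw [zero_add] at hx
  have hcoe : ((x : ℝ) : AddCircle (2 * Real.pi)) + (Real.pi : AddCircle (2 * Real.pi))
      = ((x + Real.pi : ℝ) : AddCircle (2 * Real.pi)) := by
    rw [AddCircle.coe_add]
  rcases lt_or_ge x Real.pi with hlt | hge
  · have hmem : x + Real.pi ∈ Set.Ico (0:ℝ) (0 + 2 * Real.pi) :=
      ⟨by linarith [hx.1, Real.pi_pos], by linarith [hx.1]⟩
    rw [hcoe, gg, AddCircle.liftIco_coe_apply ⟨hx.1, by rw [zero_add]; exact hx.2⟩,
      AddCircle.liftIco_coe_apply hmem, ff_of_le hlt.le,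
      ff_of_ge hσ2 hh (by linarith [hx.1]), ]
    have harith : (x + Real.pi) / Real.pi - 1 = x / Real.pi := by
      rw [add_div, div_self Real.pi_ne_zero]
      ring
    rw [harith, hσ2]
  · have hsub : ((x + Real.pi : ℝ) : AddCircle (2 * Real.pi))
        = ((x - Real.pi : ℝ) : AddCircle (2 * Real.pi)) := by
      rw [show (x - Real.pi : ℝ) = (x + Real.pi) - 2 * Real.pi by ring, coe_sub_period]
    have hmem : x - Real.pi ∈ Set.Ico (0:ℝ) (0 + 2 * Real.pi) :=
      ⟨by linarith, by linarith [hx.2, Real.pi_pos]⟩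
    rw [hcoe, hsub, gg, AddCircle.liftIco_coe_apply ⟨hx.1, by rw [zero_add]; exact hx.2⟩,
      AddCircle.liftIco_coe_apply hmem, ff_of_ge hσ2 hh hge,
      ff_of_le (by linarith [hx.2])]
    have harith : (x - Real.pi) / Real.pi = x / Real.pi - 1 := by
      rw [sub_div, div_self Real.pi_ne_zero]
    rw [harith]


section Maps

/-- The restriction map to the first half arc. -/
def Phi (g : realLoopGroupC σ) : twistedLoopGroup σ :=
  ⟨(g : C(AddCircle (2 * Real.pi), U2)).comp halfCircle, by
    show (g : C(AddCircle (2 * Real.pi), U2)) (halfCircle 0)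
        = σ ((g : C(AddCircle (2 * Real.pi), U2)) (halfCircle 1))
    have h0 : halfCircle (0 : unitInterval) = (((0:ℝ)) : AddCircle (2 * Real.pi)) := by
      show ((Real.pi * ((0 : unitInterval) : ℝ) : ℝ) : AddCircle (2 * Real.pi)) = _
      norm_num
    have h1 : halfCircle (1 : unitInterval) = ((Real.pi : ℝ) : AddCircle (2 * Real.pi)) := by
      show ((Real.pi * ((1 : unitInterval) : ℝ) : ℝ) : AddCircle (2 * Real.pi)) = _
      norm_num
    have hg := g.2 (((0:ℝ)) : AddCircle (2 * Real.pi))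
    rw [show (((0:ℝ)) : AddCircle (2 * Real.pi)) + (Real.pi : AddCircle (2 * Real.pi))
        = ((Real.pi : ℝ) : AddCircle (2 * Real.pi)) from by
      rw [← AddCircle.coe_add, zero_add]] at hg
    rw [h0, h1]
    exact hg⟩

/-- The gluing map, inverse to `Phi`. -/
noncomputable def Psi (hσ2 : ∀ A : U2, σ (σ A) = A) (hσc : Continuous σ)
    (h : twistedLoopGroup σ) : realLoopGroupC σ :=
  ⟨⟨gg σ h.1, gg_cont hσ2 h.2 hσc⟩, fun θ => gg_equivariant hσ2 h.2 θ⟩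

variable (hσc : Continuous σ)

include hσ2 hσc in
lemma Psi_Phi (g : realLoopGroupC σ) : Psi hσ2 hσc (Phi g) = g := by
  apply Subtype.ext
  apply ContinuousMap.ext
  intro θ
  obtain ⟨x, hx, rfl⟩ := exists_rep θ
  have hx' : x ∈ Set.Ico (0:ℝ) (2 * Real.pi) := by rwa [zero_add] at hx
  show gg σ ((g : C(AddCircle (2 * Real.pi), U2)).comp halfCircle) _ = _
  rw [gg, AddCircle.liftIco_coe_apply hx]
  rcases le_or_gt x Real.pi with hle | hlt
  · rw [ff_of_le hle]
    have hmem : x / Real.pi ∈ Set.Icc (0:ℝ) 1 :=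
      ⟨div_nonneg hx'.1 Real.pi_pos.le, (div_le_one Real.pi_pos).2 hle⟩
    rw [HH, Set.IccExtend_of_mem _ _ hmem]
    show (g : C(AddCircle (2 * Real.pi), U2)) (halfCircle ⟨x / Real.pi, hmem⟩) = _
    congr 1
    show ((Real.pi * (x / Real.pi) : ℝ) : AddCircle (2 * Real.pi)) = _
    rw [show Real.pi * (x / Real.pi) = x from by field_simp]
  · have hmemb : ((g : C(AddCircle (2 * Real.pi), U2)).comp halfCircle) 0
        = σ (((g : C(AddCircle (2 * Real.pi), U2)).comp halfCircle) 1) := (Phi g).2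
    rw [ff_of_ge hσ2 hmemb hlt.le]
    have hmem : x / Real.pi - 1 ∈ Set.Icc (0:ℝ) 1 := by
      constructor
      · rw [sub_nonneg, le_div_iff₀ Real.pi_pos, one_mul]
        exact hlt.le
      · rw [sub_le_iff_le_add, div_le_iff₀ Real.pi_pos]
        nlinarith [hx'.2, Real.pi_pos]
    rw [HH, Set.IccExtend_of_mem _ _ hmem]
    show σ ((g : C(AddCircle (2 * Real.pi), U2)) (halfCircle ⟨x / Real.pi - 1, hmem⟩)) = _
    have hhc : halfCircle ⟨x / Real.pi - 1, hmem⟩ = ((x - Real.pi : ℝ) : AddCircle (2 * Real.pi)) := by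
      show ((Real.pi * (x / Real.pi - 1) : ℝ) : AddCircle (2 * Real.pi)) = _
      rw [show Real.pi * (x / Real.pi - 1) = x - Real.pi from by field_simp]
    rw [hhc, g.2 ((x : ℝ) : AddCircle (2 * Real.pi)), ← AddCircle.coe_add,
      show ((x + Real.pi : ℝ) : AddCircle (2 * Real.pi))
        = ((x - Real.pi : ℝ) : AddCircle (2 * Real.pi)) from by
        rw [show (x - Real.pi : ℝ) = (x + Real.pi) - 2 * Real.pi from by ring, coe_sub_period]]

include hσ2 hσc in
lemma Phi_Psi (h : twistedLoopGroup σ) : Phi (Psi hσ2 hσc h) = h := by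
  apply Subtype.ext
  apply ContinuousMap.ext
  intro t
  exact gg_coe_pi_mul t

/-- The gluing of the two half arcs onto the circle. -/
noncomputable def QQ : unitInterval ⊕ unitInterval → AddCircle (2 * Real.pi) :=
  Sum.elim (fun t => ((Real.pi * t : ℝ) : AddCircle (2 * Real.pi)))
    (fun t => ((Real.pi + Real.pi * t : ℝ) : AddCircle (2 * Real.pi)))

lemma QQ_cont : Continuous QQ := by
  refine Continuous.sumElim ?_ ?_ <;>
    exact (AddCircle.continuous_mk' _).comp (by continuity)

lemma QQ_surj : Function.Surjective QQ := by
  intro θ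
  obtain ⟨x, hx, rfl⟩ := exists_rep θ
  rw [zero_add] at hx
  rcases le_or_gt x Real.pi with hle | hlt
  · refine ⟨Sum.inl ⟨x / Real.pi, div_nonneg hx.1 Real.pi_pos.le, (div_le_one Real.pi_pos).2 hle⟩, ?_⟩
    show ((Real.pi * (x / Real.pi) : ℝ) : AddCircle (2 * Real.pi)) = _
    rw [show Real.pi * (x / Real.pi) = x from by field_simp]
  · refine ⟨Sum.inr ⟨x / Real.pi - 1, ?_, ?_⟩, ?_⟩
    · rw [sub_nonneg, le_div_iff₀ Real.pi_pos, one_mul]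
      exact hlt.le
    · rw [sub_le_iff_le_add, div_le_iff₀ Real.pi_pos]
      nlinarith [hx.2, Real.pi_pos]
    · show ((Real.pi + Real.pi * (x / Real.pi - 1) : ℝ) : AddCircle (2 * Real.pi)) = _
      rw [show Real.pi + Real.pi * (x / Real.pi - 1) = x from by field_simp; ring]

include hσ2 hh in
lemma gg_comp_QQ (s : unitInterval ⊕ unitInterval) :
    gg σ h (QQ s) = Sum.elim (fun t => h t) (fun t => σ (h t)) s := by
  rcases s with t | t
  · exact gg_coe_pi_mul t
  · rcases eq_or_lt_of_le t.2.2 with h1 | h1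
    · have hQ : QQ (Sum.inr t) = (((0:ℝ)) : AddCircle (2 * Real.pi)) := by
        show ((Real.pi + Real.pi * (t : ℝ) : ℝ) : AddCircle (2 * Real.pi)) = _
        rw [show Real.pi + Real.pi * (t : ℝ) = 2 * Real.pi from by rw [h1]; ring,
          ← coe_sub_period (2 * Real.pi), sub_self]
      rw [hQ, gg, AddCircle.liftIco_coe_apply
          ⟨le_refl (0:ℝ), by rw [zero_add]; exact two_pi_pos⟩,
        ff_of_le Real.pi_pos.le, zero_div, HH_zero, hh,
        show t = (1 : unitInterval) from Subtype.ext (by simp [h1])]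
      rfl
    · have hmem : Real.pi + Real.pi * (t : ℝ) ∈ Set.Ico (0:ℝ) (0 + 2 * Real.pi) := by
        constructor
        · nlinarith [Real.pi_pos, t.2.1]
        · rw [zero_add]; nlinarith [Real.pi_pos, h1]
      show gg σ h ((Real.pi + Real.pi * (t : ℝ) : ℝ) : AddCircle (2 * Real.pi)) = _
      rw [gg, AddCircle.liftIco_coe_apply hmem,
        ff_of_ge hσ2 hh (by nlinarith [t.2.1, Real.pi_pos]),
        show (Real.pi + Real.pi * (t : ℝ)) / Real.pi - 1 = (t : ℝ) from by field_simp; ring,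
        HH_coe]
      rfl

include hσ2 hσc in
lemma Psi_uncurry_cont :
    Continuous (fun p : twistedLoopGroup σ × AddCircle (2 * Real.pi) => gg σ p.1.1 p.2) := by
  have hq : IsQuotientMap (Prod.map (id : twistedLoopGroup σ → twistedLoopGroup σ) QQ) :=
    ((isProperMap_id.prodMap (QQ_cont.isProperMap)).isClosedMap).isQuotientMap
      (continuous_id.prodMap QQ_cont) (Function.surjective_id.prodMap QQ_surj)
  rw [hq.continuous_iff]
  have heq : (fun p : twistedLoopGroup σ × AddCircle (2 * Real.pi) => gg σ p.1.1 p.2)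
        ∘ (Prod.map (id : twistedLoopGroup σ → twistedLoopGroup σ) QQ)
      = fun p : twistedLoopGroup σ × (unitInterval ⊕ unitInterval) =>
          Sum.elim (fun t => p.1.1 t) (fun t => σ (p.1.1 t)) p.2 := by
    funext p
    exact gg_comp_QQ hσ2 p.1.2 p.2
  rw [heq]
  have he : Continuous (fun p : ↥(twistedLoopGroup σ) × unitInterval => (p.1.1) p.2) :=
    continuous_eval.comp (continuous_subtype_val.prodMap continuous_id)
  have hK : Continuous (Sum.elim
      (fun p : ↥(twistedLoopGroup σ) × unitInterval => (p.1.1) p.2)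
      (fun p : ↥(twistedLoopGroup σ) × unitInterval => σ ((p.1.1) p.2))) :=
    he.sumElim (hσc.comp he)
  have hd := hK.comp
    (Homeomorph.prodSumDistrib :
      ↥(twistedLoopGroup σ) × (unitInterval ⊕ unitInterval) ≃ₜ
        ↥(twistedLoopGroup σ) × unitInterval ⊕ ↥(twistedLoopGroup σ) × unitInterval).continuous
  convert hd using 1
  funext p
  rcases p with ⟨g, t | t⟩ <;> rfl

include hσ2 hσc in
lemma Psi_cont : Continuous (Psi hσ2 hσc) := by
  apply continuous_induced_rng.2
  show Continuous fun h : twistedLoopGroup σ =>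
    ((Psi hσ2 hσc h : C(AddCircle (2 * Real.pi), U2)))
  apply ContinuousMap.continuous_of_continuous_uncurry
  exact Psi_uncurry_cont hσ2 hσc

end Maps

end Stmt7Aux

theorem stmt7 (σ : U2 ≃* U2) (hσcont : Continuous σ)
    (hσ : ∀ A : U2, ((σ A : Matrix (Fin 2) (Fin 2) ℂ))
      = (A : Matrix (Fin 2) (Fin 2) ℂ).map (starRingEnd ℂ)) :
    ∃ e : realLoopGroupC σ ≃* twistedLoopGroup σ,
      Continuous e ∧ Continuous e.symm ∧
      ∀ g : realLoopGroupC σ,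
        (e g : C(unitInterval, U2)) = (g : C(AddCircle (2 * Real.pi), U2)).comp halfCircle := by
  have hσ2 : ∀ A : U2, σ (σ A) = A := by
    intro A
    apply Subtype.ext
    rw [hσ, hσ]
    ext i j
    simp [Matrix.map_apply]
  refine ⟨{ toFun := Stmt7Aux.Phi, invFun := Stmt7Aux.Psi hσ2 hσcont,
            left_inv := Stmt7Aux.Psi_Phi hσ2 hσcont,
            right_inv := Stmt7Aux.Phi_Psi hσ2 hσcont,
            map_mul' := ?_ }, ?_, ?_, ?_⟩
  · intro g g'
    rfl
  · exact continuous_induced_rng.2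
      ((ContinuousMap.continuous_precomp halfCircle).comp continuous_subtype_val)
  · exact Stmt7Aux.Psi_cont hσ2 hσcont
  · intro g
    rfl

end
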